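/- Let L > 0, x₀ ∈ [0, L/2), and for ν < 0 define h(ν) = -(ν/2)·(coth((ν/2)(L/2 - x₀)) + coth((ν/2)(L/2 + x₀))). Then h is strictly increasing on (-∞, 0), lim_{ν→0⁻} h(ν) = -L/(L²/4 - x₀²), and lim_{ν→-∞} h(ν)/ν = 1. -/

import Mathlib

open Real Filter Set

lemma piece_deriv (c ν : ℝ) (hs : Real.sinh (ν/2*c) ≠ 0) :
    HasDerivAt (fun ν : ℝ => -(ν/2) * (Real.cosh (ν/2*c) / Real.sinh (ν/2*c)))
      ((ν/2*c - Real.sinh (ν/2*c) * Real.cosh (ν/2*c)) / (2 * Real.sinh (ν/2*c)^2)) ν := by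
  have hu : HasDerivAt (fun ν : ℝ => ν/2*c) (c/2) ν := by
    have := ((hasDerivAt_id' ν).div_const 2).mul_const c
    exact this.congr_deriv (by ring)
  have hcosh : HasDerivAt (fun ν : ℝ => Real.cosh (ν/2*c)) (Real.sinh (ν/2*c) * (c/2)) ν :=
    (Real.hasDerivAt_cosh _).comp ν hu
  have hsinh : HasDerivAt (fun ν : ℝ => Real.sinh (ν/2*c)) (Real.cosh (ν/2*c) * (c/2)) ν :=
    (Real.hasDerivAt_sinh _).comp ν hu
  have hq := hcosh.fun_div hsinh hs
  have hlin : HasDerivAt (fun ν : ℝ => -(ν/2)) (-(1/2)) ν := by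
    simpa using ((hasDerivAt_id' ν).div_const 2).fun_neg
  have hmul := hlin.fun_mul hq
  refine hmul.congr_deriv ?_
  have h2 : Real.cosh (ν/2*c)^2 - Real.sinh (ν/2*c)^2 = 1 := Real.cosh_sq_sub_sinh_sq _
  set S := Real.sinh (ν/2*c) with hS
  set C := Real.cosh (ν/2*c) with hC
  field_simp
  ring_nf
  linear_combination (ν*c) * h2

lemma piece_pos (u : ℝ) (hu : u < 0) :
    0 < (u - Real.sinh u * Real.cosh u) / (2 * Real.sinh u ^ 2) := by
  have h1 : Real.sinh (2*u) < 2*u := Real.sinh_lt_self_iff.2 (by linarith)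
  rw [Real.sinh_two_mul] at h1
  have hsneg : Real.sinh u < 0 := Real.sinh_neg_iff.2 hu
  have hs2 : 0 < Real.sinh u ^ 2 := by nlinarith
  exact div_pos (by linarith) (by linarith)

lemma G_lim : Tendsto (fun t : ℝ => t * Real.cosh t / Real.sinh t)
    (nhdsWithin 0 {(0:ℝ)}ᶜ) (nhds 1) := by
  have h1 := Real.hasDerivAt_sinh 0
  rw [hasDerivAt_iff_tendsto_slope] at h1
  rw [Real.cosh_zero] at h1
  have h2 : Tendsto (fun t : ℝ => (slope Real.sinh 0 t)⁻¹)
      (nhdsWithin 0 {(0:ℝ)}ᶜ) (nhds 1) := by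
    simpa using h1.inv₀ one_ne_zero
  have h3 : Tendsto (fun t : ℝ => Real.cosh t) (nhdsWithin 0 {(0:ℝ)}ᶜ) (nhds 1) := by
    have := Real.continuous_cosh.continuousAt (x := (0:ℝ))
    simpa [Real.cosh_zero] using this.tendsto.mono_left nhdsWithin_le_nhds
  have h4 := h2.mul h3
  rw [one_mul] at h4
  refine h4.congr fun t => ?_
  rw [slope_def_field, Real.sinh_zero, sub_zero, sub_zero, inv_div, div_mul_eq_mul_div]

lemma coth_atBot : Tendsto (fun t : ℝ => Real.cosh t / Real.sinh t) atBot (nhds (-1)) := by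
  have h1 : Tendsto (fun t : ℝ => Real.exp (2*t)) atBot (nhds 0) := by
    refine Real.tendsto_exp_atBot.comp ?_
    exact tendsto_id.const_mul_atBot two_pos
  have h2 : Tendsto (fun t : ℝ => (Real.exp (2*t) + 1) / (Real.exp (2*t) - 1)) atBot
      (nhds (-1)) := by
    have := ((h1.add_const 1).div (h1.sub_const 1) (by norm_num))
    simpa [Pi.div_def] using this
  refine h2.congr' ?_
  filter_upwards [eventually_lt_atBot (0:ℝ)] with t ht
  have hst : Real.sinh t ≠ 0 := Real.sinh_ne_zero.2 ht.ne
  have he : Real.exp (2*t) - 1 ≠ 0 := by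
    have : Real.exp (2*t) < 1 := by
      rw [Real.exp_lt_one_iff]; linarith
    linarith
  rw [Real.cosh_eq, Real.sinh_eq]
  have h2t : Real.exp (2*t) = Real.exp t * Real.exp t := by
    rw [← Real.exp_add]; ring_nf
  have hx := Real.exp_pos t
  have hxn : Real.exp (-t) = (Real.exp t)⁻¹ := Real.exp_neg t
  have hd : Real.exp t - Real.exp (-t) ≠ 0 := by
    rw [Real.sinh_eq] at hst
    intro hcon; apply hst; rw [hcon]; norm_num
  rw [h2t] at he ⊢
  rw [hxn] at hd ⊢
  field_simp

theorem stmt_13 (L x₀ : ℝ) (hL : 0 < L) (hx₀ : 0 ≤ x₀) (hx₀' : x₀ < L/2)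
    (h : ℝ → ℝ)
    (hh : ∀ ν, h ν = -(ν/2) *
      (Real.cosh (ν/2*(L/2 - x₀)) / Real.sinh (ν/2*(L/2 - x₀))
        + Real.cosh (ν/2*(L/2 + x₀)) / Real.sinh (ν/2*(L/2 + x₀)))) :
    StrictMonoOn h (Set.Iio 0) ∧
    Tendsto h (nhdsWithin 0 (Set.Iio 0)) (nhds (-L/(L^2/4 - x₀^2))) ∧
    Tendsto (fun ν => h ν / ν) atBot (nhds 1) := by
  have hc₁ : 0 < L/2 - x₀ := by linarith
  have hc₂ : 0 < L/2 + x₀ := by linarith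
  set c₁ := L/2 - x₀ with hc₁def
  set c₂ := L/2 + x₀ with hc₂def
  have hfun : h = fun ν => -(ν/2) * (Real.cosh (ν/2*c₁) / Real.sinh (ν/2*c₁)
      + Real.cosh (ν/2*c₂) / Real.sinh (ν/2*c₂)) := funext hh
  subst hfun
  -- nonvanishing of sinh for ν < 0
  have hsin : ∀ (c ν : ℝ), 0 < c → ν < 0 → Real.sinh (ν/2*c) ≠ 0 := by
    intro c ν hc hν
    exact Real.sinh_ne_zero.2 (mul_neg_of_neg_of_pos (by linarith) hc).ne
  -- derivative
  have key : ∀ ν ∈ Set.Iio (0:ℝ),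
      HasDerivAt (fun ν => -(ν/2) * (Real.cosh (ν/2*c₁) / Real.sinh (ν/2*c₁)
        + Real.cosh (ν/2*c₂) / Real.sinh (ν/2*c₂)))
      ((ν/2*c₁ - Real.sinh (ν/2*c₁) * Real.cosh (ν/2*c₁)) / (2 * Real.sinh (ν/2*c₁)^2)
        + (ν/2*c₂ - Real.sinh (ν/2*c₂) * Real.cosh (ν/2*c₂)) / (2 * Real.sinh (ν/2*c₂)^2)) ν := by
    intro ν hν
    have e : (fun ν : ℝ => -(ν/2) * (Real.cosh (ν/2*c₁) / Real.sinh (ν/2*c₁)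
        + Real.cosh (ν/2*c₂) / Real.sinh (ν/2*c₂)))
        = fun ν : ℝ => -(ν/2) * (Real.cosh (ν/2*c₁) / Real.sinh (ν/2*c₁))
          + -(ν/2) * (Real.cosh (ν/2*c₂) / Real.sinh (ν/2*c₂)) := by
      funext ν; ring
    rw [e]
    exact (piece_deriv c₁ ν (hsin c₁ ν hc₁ hν)).add (piece_deriv c₂ ν (hsin c₂ ν hc₂ hν))
  refine ⟨?_, ?_, ?_⟩
  · -- strict mono
    apply strictMonoOn_of_deriv_pos (convex_Iio 0)
    · intro x hx
      exact (key x hx).continuousAt.continuousWithinAt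
    · intro x hx
      rw [interior_Iio] at hx
      rw [(key x hx).deriv]
      have hx' : x < 0 := hx
      have p₁ := piece_pos (x/2*c₁) (mul_neg_of_neg_of_pos (by linarith) hc₁)
      have p₂ := piece_pos (x/2*c₂) (mul_neg_of_neg_of_pos (by linarith) hc₂)
      exact add_pos p₁ p₂
  · -- limit at 0⁻
    have comp : ∀ c : ℝ, 0 < c → Tendsto (fun ν : ℝ => ν/2*c)
        (nhdsWithin 0 (Set.Iio 0)) (nhdsWithin 0 {(0:ℝ)}ᶜ) := by
      intro c hc
      rw [tendsto_nhdsWithin_iff]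
      constructor
      · have hcont : Tendsto (fun ν:ℝ => ν/2*c) (nhds 0) (nhds (0/2*c)) :=
          ((continuous_id.div_const 2).mul continuous_const).tendsto 0
        simpa using hcont.mono_left nhdsWithin_le_nhds
      · filter_upwards [self_mem_nhdsWithin] with ν hν
        have hν' : ν < 0 := hν
        exact (mul_neg_of_neg_of_pos (by linarith) hc).ne
    have t₁ := (G_lim.comp (comp c₁ hc₁)).const_mul (-(1/c₁))
    have t₂ := (G_lim.comp (comp c₂ hc₂)).const_mul (-(1/c₂))
    have tsum := t₁.add t₂
    have heq : -(1/c₁) * 1 + -(1/c₂) * 1 = -L/(L^2/4 - x₀^2) := by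
      have hd : L^2/4 - x₀^2 = c₁ * c₂ := by rw [hc₁def, hc₂def]; ring
      rw [hd]
      field_simp
      ring
    rw [heq] at tsum
    refine tsum.congr fun ν => ?_
    show -(1/c₁) * (ν/2*c₁ * Real.cosh (ν/2*c₁) / Real.sinh (ν/2*c₁))
        + -(1/c₂) * (ν/2*c₂ * Real.cosh (ν/2*c₂) / Real.sinh (ν/2*c₂))
      = -(ν/2) * (Real.cosh (ν/2*c₁) / Real.sinh (ν/2*c₁)
        + Real.cosh (ν/2*c₂) / Real.sinh (ν/2*c₂))
    have key2 : ∀ (c X : ℝ), c ≠ 0 → -(1/c)*(ν/2*c*X) = -(ν/2)*X := by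
      intro c X hc; field_simp
    rw [mul_div_assoc, mul_div_assoc, key2 c₁ _ hc₁.ne', key2 c₂ _ hc₂.ne']
    ring
  · -- limit at -∞
    have compB : ∀ c : ℝ, 0 < c → Tendsto (fun ν : ℝ => ν/2*c) atBot atBot := by
      intro c hc
      exact (tendsto_id.atBot_div_const two_pos).atBot_mul_const hc
    have t₁ := coth_atBot.comp (compB c₁ hc₁)
    have t₂ := coth_atBot.comp (compB c₂ hc₂)
    have tsum := (t₁.add t₂).const_mul (-(1/2) : ℝ)
    have heq : (-(1/2) : ℝ) * (-1 + -1) = 1 := by norm_num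
    rw [heq] at tsum
    refine tsum.congr' ?_
    filter_upwards [eventually_lt_atBot (0:ℝ)] with ν hν
    have hne : ν ≠ 0 := hν.ne
    show -(1/2) * (Real.cosh (ν/2*c₁) / Real.sinh (ν/2*c₁)
        + Real.cosh (ν/2*c₂) / Real.sinh (ν/2*c₂))
      = -(ν/2) * (Real.cosh (ν/2*c₁) / Real.sinh (ν/2*c₁)
        + Real.cosh (ν/2*c₂) / Real.sinh (ν/2*c₂)) / ν
    rw [eq_div_iff hne]
    ring
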